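/- For every n ≥ 0, the number of solutions of x·y ≡ 0 (mod p^{n+1}) in (Z/p^{n+1}Z)^2 equals (n+2)·p^{n+1} − (n+1)·p^n. -/

import Mathlib

lemma ann_card (m : ℕ) [NeZero m] (x : ZMod m) :
    Nat.card {y : ZMod m // x * y = 0} = m.gcd x.val := by
  have hm : m ≠ 0 := NeZero.ne m
  set g := m.gcd x.val with hg
  set d := m / g with hd
  have hg0 : g ≠ 0 := Nat.gcd_ne_zero_left hm
  have hgdvd : g ∣ m := Nat.gcd_dvd_left m x.val
  have hgx : g ∣ x.val := Nat.gcd_dvd_right m x.val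
  have hdg : d * g = m := Nat.div_mul_cancel hgdvd
  have hset : {y : ZMod m | x * y = 0} = (AddSubgroup.zmultiples ((d : ℕ) : ZMod m) : Set (ZMod m)) := by
    ext y
    simp only [Set.mem_setOf_eq, SetLike.mem_coe, AddSubgroup.mem_zmultiples_iff]
    constructor
    · intro h
      have h1 : ((x.val * y.val : ℕ) : ZMod m) = 0 := by
        push_cast
        rw [ZMod.natCast_val, ZMod.natCast_val, ZMod.cast_id, ZMod.cast_id, h]
      rw [ZMod.natCast_eq_zero_iff] at h1
      have hcop : Nat.Coprime d (x.val / g) :=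
        Nat.coprime_div_gcd_div_gcd (m := m) (n := x.val) (Nat.pos_of_ne_zero hg0)
      have hdvd : d ∣ (x.val / g) * y.val := by
        have h2 : d * g ∣ (x.val / g) * y.val * g := by
          rw [hdg]
          have h3 : (x.val / g) * y.val * g = x.val * y.val := by
            rw [mul_comm _ g, ← mul_assoc, Nat.mul_div_cancel' hgx]
          rw [h3]; exact h1
        exact (Nat.mul_dvd_mul_iff_right (Nat.pos_of_ne_zero hg0)).mp h2
      have hdy : d ∣ y.val := Nat.Coprime.dvd_of_dvd_mul_left hcop hdvd
      refine ⟨((y.val / d : ℕ) : ℤ), ?_⟩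
      rw [natCast_zsmul, nsmul_eq_mul, ← Nat.cast_mul, Nat.div_mul_cancel hdy,
        ZMod.natCast_val, ZMod.cast_id]
    · rintro ⟨k, rfl⟩
      have hxd : x * ((d : ℕ) : ZMod m) = 0 := by
        have h2 : ((x.val * d : ℕ) : ZMod m) = 0 := by
          rw [ZMod.natCast_eq_zero_iff]
          obtain ⟨c, hc⟩ := hgx
          rw [hc]
          exact ⟨c, by rw [← hdg]; ring⟩
        calc x * ((d : ℕ) : ZMod m) = ((x.val * d : ℕ) : ZMod m) := by
              push_cast; rw [ZMod.natCast_val, ZMod.cast_id]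
          _ = 0 := h2
      calc x * (k • ((d : ℕ) : ZMod m)) = k • (x * ((d : ℕ) : ZMod m)) := by
            rw [mul_smul_comm]
        _ = 0 := by rw [hxd, smul_zero]
  have hc : Nat.card {y : ZMod m // x * y = 0}
      = Nat.card (AddSubgroup.zmultiples ((d : ℕ) : ZMod m)) :=
    Nat.card_congr (Equiv.setCongr hset)
  rw [hc, Nat.card_zmultiples, ZMod.addOrderOf_coe _ hm]
  have hdm : d ∣ m := Nat.div_dvd_of_dvd hgdvd
  rw [Nat.gcd_eq_right hdm, hd, Nat.div_div_self hgdvd hm]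

lemma sum_range_mul_eq (f : ℕ → ℕ) (a b : ℕ) (hb : 0 < b) :
    ∑ i ∈ Finset.range (a * b), f i
      = ∑ q ∈ Finset.range a, ∑ r ∈ Finset.range b, f (q * b + r) := by
  rw [← Finset.sum_product']
  refine Finset.sum_nbij' (fun i => (i / b, i % b)) (fun qr => qr.1 * b + qr.2)
    ?_ ?_ ?_ ?_ ?_
  · intro i hi
    simp only [Finset.mem_range] at hi
    simp only [Finset.mem_product, Finset.mem_range]
    exact ⟨(Nat.div_lt_iff_lt_mul hb).mpr hi, Nat.mod_lt _ hb⟩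
  · intro qr hqr
    simp only [Finset.mem_product, Finset.mem_range] at hqr
    simp only [Finset.mem_range]
    calc qr.1 * b + qr.2 < qr.1 * b + b := by omega
      _ = (qr.1 + 1) * b := by ring
      _ ≤ a * b := Nat.mul_le_mul_right b hqr.1
  · intro i _
    simp only []
    exact Nat.div_add_mod' i b
  · intro qr hqr
    simp only [Finset.mem_product, Finset.mem_range] at hqr
    have h1 : (qr.1 * b + qr.2) / b = qr.1 := by
      rw [mul_comm qr.1 b, Nat.mul_add_div hb, Nat.div_eq_of_lt hqr.2, Nat.add_zero]
    have h2 : (qr.1 * b + qr.2) % b = qr.2 := by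
      rw [mul_comm qr.1 b, Nat.mul_add_mod, Nat.mod_eq_of_lt hqr.2]
    simp only [h1, h2]
  · intro i _
    simp only []
    rw [Nat.div_add_mod']

lemma sum_gcd_pow (p : ℕ) (hp : p.Prime) :
    ∀ n : ℕ, (∑ i ∈ Finset.range (p ^ (n + 1)), Nat.gcd (p ^ (n + 1)) i)
      + (n + 1) * p ^ n = (n + 2) * p ^ (n + 1) := by
  obtain ⟨p', rfl⟩ : ∃ p', p = p' + 1 := ⟨p - 1, by have := hp.two_le; omega⟩
  intro n
  induction n with
  | zero =>
    have h : ∑ i ∈ Finset.range ((p' + 1) ^ 1), Nat.gcd ((p' + 1) ^ 1) i = p' + (p' + 1) := by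
      rw [pow_one, Finset.sum_range_succ' _ p', Nat.gcd_zero_right]
      have h2 : ∑ k ∈ Finset.range p', Nat.gcd (p' + 1) (k + 1)
          = ∑ _k ∈ Finset.range p', 1 := by
        apply Finset.sum_congr rfl
        intro k hk
        simp only [Finset.mem_range] at hk
        exact Nat.Coprime.gcd_eq_one (hp.coprime_iff_not_dvd.mpr (fun hdvd => by
          have := Nat.le_of_dvd (by omega) hdvd; omega))
      rw [h2, Finset.sum_const, smul_eq_mul, mul_one, Finset.card_range]
    rw [h]; ring
  | succ n ih =>
    have hsplit : ∑ i ∈ Finset.range ((p' + 1) ^ (n + 2)), Nat.gcd ((p' + 1) ^ (n + 2)) i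
        = ∑ q ∈ Finset.range ((p' + 1) ^ (n + 1)), ∑ r ∈ Finset.range (p' + 1),
            Nat.gcd ((p' + 1) ^ (n + 2)) (q * (p' + 1) + r) := by
      rw [← sum_range_mul_eq _ _ _ (by omega), ← pow_succ]
    have hinner : ∀ q ∈ Finset.range ((p' + 1) ^ (n + 1)),
        ∑ r ∈ Finset.range (p' + 1), Nat.gcd ((p' + 1) ^ (n + 2)) (q * (p' + 1) + r)
          = Nat.gcd ((p' + 1) ^ (n + 1)) q * (p' + 1) + p' := by
      intro q _
      rw [Finset.sum_range_succ' _ p']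
      have h0 : Nat.gcd ((p' + 1) ^ (n + 2)) (q * (p' + 1) + 0)
          = Nat.gcd ((p' + 1) ^ (n + 1)) q * (p' + 1) := by
        simp only [Nat.add_zero, pow_succ, Nat.gcd_mul_right]
      have h1 : ∀ k ∈ Finset.range p',
          Nat.gcd ((p' + 1) ^ (n + 2)) (q * (p' + 1) + (k + 1)) = 1 := by
        intro k hk
        simp only [Finset.mem_range] at hk
        apply Nat.Coprime.gcd_eq_one
        apply Nat.Coprime.pow_left
        apply hp.coprime_iff_not_dvd.mpr
        intro hdvd
        have h2 : p' + 1 ∣ k + 1 :=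
          (Nat.dvd_add_right (Dvd.intro_left q rfl)).mp hdvd
        have := Nat.le_of_dvd (by omega) h2
        omega
      rw [Finset.sum_congr rfl h1, Finset.sum_const, smul_eq_mul, mul_one, h0,
        Finset.card_range]
      omega
    rw [hsplit, Finset.sum_congr rfl hinner, Finset.sum_add_distrib,
      Finset.sum_const, smul_eq_mul, ← Finset.sum_mul, Finset.card_range]
    have e : (∑ i ∈ Finset.range ((p' + 1) ^ (n + 1)), Nat.gcd ((p' + 1) ^ (n + 1)) i)
          * (p' + 1) + (p' + 1) ^ (n + 1) * p' + (n + 1 + 1) * (p' + 1) ^ (n + 1)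
        = ((∑ i ∈ Finset.range ((p' + 1) ^ (n + 1)), Nat.gcd ((p' + 1) ^ (n + 1)) i)
          + (n + 1) * (p' + 1) ^ n) * (p' + 1) + (p' + 1) ^ (n + 2) := by
      ring
    rw [e, ih]
    ring

/-- The number of solutions of `x*y ≡ 0 (mod p^(n+1))` in `(ℤ/p^(n+1)ℤ)²`
equals `(n+2)·p^(n+1) − (n+1)·p^n`. -/
theorem stmt_0 (p : ℕ) (hp : p.Prime) (n : ℕ) :
    Nat.card {z : ZMod (p ^ (n + 1)) × ZMod (p ^ (n + 1)) // z.1 * z.2 = 0} =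
      (n + 2) * p ^ (n + 1) - (n + 1) * p ^ n := by
  have hm : p ^ (n + 1) ≠ 0 := pow_ne_zero _ hp.pos.ne'
  haveI : NeZero (p ^ (n + 1)) := ⟨hm⟩
  have h1 : Nat.card {z : ZMod (p ^ (n + 1)) × ZMod (p ^ (n + 1)) // z.1 * z.2 = 0}
      = ∑ x : ZMod (p ^ (n + 1)), Nat.card {y : ZMod (p ^ (n + 1)) // x * y = 0} := by
    rw [Nat.card_congr (Equiv.subtypeProdEquivSigmaSubtype
      (fun a b : ZMod (p ^ (n + 1)) => a * b = 0))]
    rw [Nat.card_eq_fintype_card, Fintype.card_sigma]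
    exact Finset.sum_congr rfl fun x _ => (Nat.card_eq_fintype_card).symm
  have h2 : ∑ x : ZMod (p ^ (n + 1)), Nat.card {y : ZMod (p ^ (n + 1)) // x * y = 0}
      = ∑ x : ZMod (p ^ (n + 1)), Nat.gcd (p ^ (n + 1)) x.val :=
    Finset.sum_congr rfl fun x _ => ann_card _ x
  have h3 : ∑ x : ZMod (p ^ (n + 1)), Nat.gcd (p ^ (n + 1)) x.val
      = ∑ i ∈ Finset.range (p ^ (n + 1)), Nat.gcd (p ^ (n + 1)) i := by
    refine Finset.sum_nbij' (fun x => x.val) (fun i => (i : ZMod (p ^ (n + 1))))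
      ?_ ?_ ?_ ?_ ?_
    · intro x _
      simp only [Finset.mem_range]
      exact ZMod.val_lt x
    · intro i _
      exact Finset.mem_univ _
    · intro x _
      rw [ZMod.natCast_val, ZMod.cast_id]
    · intro i hi
      simp only [Finset.mem_range] at hi
      exact ZMod.val_cast_of_lt hi
    · intro x _
      rfl
  have h4 := sum_gcd_pow p hp n
  omega
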